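/- Let Q_a denote the equal-weight mixture of N(a,σ²) and N(−a,σ²). For any u, v ≥ 0, D(Q_u ‖ Q_v) ≤ ((u²−v²)/(2σ⁴))·u² + (v³·max(0, v−u)/(2σ⁸))·(u⁴ + 6u²σ² + 3σ⁴). -/

import Mathlib

open Real MeasureTheory Set

/-- Density of the Gaussian distribution `N(a, σ²)`. -/
noncomputable def gaussPdf (σ a x : ℝ) : ℝ :=
  (Real.sqrt (2 * Real.pi * σ ^ 2))⁻¹ * Real.exp (-(x - a) ^ 2 / (2 * σ ^ 2))

/-- Density of the equal-weight mixture of `N(a, σ²)` and `N(-a, σ²)`. -/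
noncomputable def mixPdf (σ a x : ℝ) : ℝ :=
  (1 / 2) * gaussPdf σ a x + (1 / 2) * gaussPdf σ (-a) x

/-! ### Pointwise analysis lemmas -/

lemma monoOn_aux {f f' : ℝ → ℝ} (hd : ∀ x, HasDerivAt f (f' x) x)
    (h' : ∀ x, 0 < x → 0 ≤ f' x) : MonotoneOn f (Set.Ici 0) := by
  apply monotoneOn_of_deriv_nonneg (convex_Ici 0)
  · exact fun x _ => (hd x).continuousAt.continuousWithinAt
  · intro x _
    exact (hd x).differentiableAt.differentiableWithinAt
  · intro x hx
    rw [interior_Ici] at hx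
    rw [(hd x).deriv]
    exact h' x hx

lemma nonneg_aux {f f' : ℝ → ℝ} (hd : ∀ x, HasDerivAt f (f' x) x) (h0 : f 0 = 0)
    (h' : ∀ x, 0 < x → 0 ≤ f' x) : ∀ t, 0 ≤ t → 0 ≤ f t := fun t ht => by
  have := monoOn_aux hd h' (Set.self_mem_Ici (a := (0:ℝ))) ht ht
  linarith [this, h0.ge]

lemma aux1 : ∀ t : ℝ, 0 ≤ t → Real.sinh t ≤ t * Real.cosh t := by
  have h := nonneg_aux (f := fun t => t * Real.cosh t - Real.sinh t)
      (f' := fun t => t * Real.sinh t) ?_ (by simp) ?_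
  · intro t ht; have := h t ht; linarith
  · intro x
    have : HasDerivAt (fun t : ℝ => t * Real.cosh t - Real.sinh t)
        (1 * Real.cosh x + x * Real.sinh x - Real.cosh x) x :=
      ((hasDerivAt_id x).mul (Real.hasDerivAt_cosh x)).sub (Real.hasDerivAt_sinh x)
    convert this using 1; ring
  · intro x hx
    exact mul_nonneg hx.le (Real.sinh_nonneg_iff.mpr hx.le)

lemma aux2 : ∀ t : ℝ, 0 ≤ t → (1 - t^2/3) * Real.sinh t ≤ t * Real.cosh t := by
  have h := nonneg_aux
      (f := fun t => t * Real.cosh t - Real.sinh t + t^2/3 * Real.sinh t)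
      (f' := fun t => t * Real.sinh t + 2*t/3 * Real.sinh t + t^2/3 * Real.cosh t) ?_ (by simp) ?_
  · intro t ht; have := h t ht; nlinarith
  · intro x
    have : HasDerivAt (fun t : ℝ => t * Real.cosh t - Real.sinh t + t^2/3 * Real.sinh t)
        ((1 * Real.cosh x + x * Real.sinh x - Real.cosh x) +
          ((2 * x^1 / 3) * Real.sinh x + x^2/3 * Real.cosh x)) x := by
      refine (((hasDerivAt_id x).mul (Real.hasDerivAt_cosh x)).sub
        (Real.hasDerivAt_sinh x)).add (HasDerivAt.mul ?_ (Real.hasDerivAt_sinh x))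
      simpa using (hasDerivAt_pow 2 x).div_const 3
    convert this using 1; ring
  · intro x hx
    have hs : 0 ≤ Real.sinh x := Real.sinh_nonneg_iff.mpr hx.le
    have hc : 0 ≤ Real.cosh x := (Real.cosh_pos x).le
    positivity

lemma aux3 : ∀ t : ℝ, 0 ≤ t → (t - t^3/3) * Real.cosh t ≤ Real.sinh t := by
  have h := nonneg_aux
      (f := fun t => Real.sinh t - (t - t^3/3) * Real.cosh t)
      (f' := fun t => t^2 * Real.cosh t - (t - t^3/3) * Real.sinh t) ?_ (by simp) ?_
  · intro t ht; have := h t ht; nlinarith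
  · intro x
    have : HasDerivAt (fun t : ℝ => Real.sinh t - (t - t^3/3) * Real.cosh t)
        (Real.cosh x - ((1 - 3 * x^2 / 3) * Real.cosh x + (x - x^3/3) * Real.sinh x)) x := by
      refine (Real.hasDerivAt_sinh x).sub (HasDerivAt.mul ?_ (Real.hasDerivAt_cosh x))
      exact ((hasDerivAt_id' x).sub ((hasDerivAt_pow 3 x).div_const 3)).congr_deriv (by norm_num)
    convert this using 1; ring
  · intro x hx
    have h2 := aux2 x hx.le
    have hs : 0 ≤ Real.sinh x := Real.sinh_nonneg_iff.mpr hx.le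
    nlinarith

lemma hasDerivAt_logcosh (x : ℝ) :
    HasDerivAt (fun t : ℝ => Real.log (Real.cosh t)) (Real.sinh x / Real.cosh x) x :=
  (Real.hasDerivAt_cosh x).log (Real.cosh_pos x).ne'

lemma mono1 : MonotoneOn (fun t : ℝ => t^2/2 - Real.log (Real.cosh t)) (Set.Ici 0) := by
  apply monoOn_aux (f' := fun t => t - Real.sinh t / Real.cosh t)
  · intro x
    have : HasDerivAt (fun t : ℝ => t^2/2 - Real.log (Real.cosh t))
        ((2 * x^1)/2 - Real.sinh x / Real.cosh x) x :=
      ((hasDerivAt_pow 2 x).div_const 2).sub (hasDerivAt_logcosh x)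
    convert this using 1; ring
  · intro x hx
    rw [sub_nonneg, div_le_iff₀ (Real.cosh_pos x)]
    exact aux1 x hx.le

lemma mono2 : MonotoneOn (fun t : ℝ => Real.log (Real.cosh t) - t^2/2 + t^4/12) (Set.Ici 0) := by
  apply monoOn_aux (f' := fun t => Real.sinh t / Real.cosh t - t + t^3/3)
  · intro x
    have : HasDerivAt (fun t : ℝ => Real.log (Real.cosh t) - t^2/2 + t^4/12)
        (Real.sinh x / Real.cosh x - (2 * x^1)/2 + (4 * x^3)/12) x :=
      ((hasDerivAt_logcosh x).sub ((hasDerivAt_pow 2 x).div_const 2)).add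
        ((hasDerivAt_pow 4 x).div_const 12)
    convert this using 1; ring
  · intro x hx
    have hle : (x - x^3/3) ≤ Real.sinh x / Real.cosh x := by
      rw [le_div_iff₀ (Real.cosh_pos x)]; exact aux3 x hx.le
    linarith

lemma logcosh_nonneg (t : ℝ) : 0 ≤ Real.log (Real.cosh t) :=
  Real.log_nonneg (Real.one_le_cosh t)

lemma logcosh_le_sq (t : ℝ) : Real.log (Real.cosh t) ≤ t^2/2 := by
  have h := mono1 (Set.self_mem_Ici (a := (0:ℝ))) (show |t| ∈ Set.Ici 0 from abs_nonneg t)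
    (abs_nonneg t)
  simp only [Real.cosh_zero, Real.log_one, Real.cosh_abs, sq_abs] at h
  linarith

lemma logcosh_diff_le (a b : ℝ) :
    Real.log (Real.cosh a) - Real.log (Real.cosh b)
      ≤ (a^2 - b^2)/2 + max 0 (b^4 - a^4)/12 := by
  have ha4 : |a|^4 = a^4 := by rw [← abs_pow, abs_of_nonneg (by positivity)]
  have hb4 : |b|^4 = b^4 := by rw [← abs_pow, abs_of_nonneg (by positivity)]
  rcases le_total |a| |b| with h | h
  · have key := mono2 (abs_nonneg a) (show |b| ∈ Set.Ici 0 from abs_nonneg b) h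
    simp only [Real.cosh_abs, sq_abs, ha4, hb4] at key
    have h4 : a^4 ≤ b^4 := by rw [← ha4, ← hb4]; exact pow_le_pow_left₀ (abs_nonneg a) h 4
    rw [max_eq_right (by linarith)]
    linarith
  · have key := mono1 (abs_nonneg b) (show |a| ∈ Set.Ici 0 from abs_nonneg a) h
    simp only [Real.cosh_abs, sq_abs] at key
    have : (0:ℝ) ≤ max 0 (b^4 - a^4) := le_max_left _ _
    linarith

/-! ### Density algebra -/

lemma gaussPdf_pos {σ : ℝ} (hσ : 0 < σ) (a x : ℝ) : 0 < gaussPdf σ a x := by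
  unfold gaussPdf
  have : 0 < Real.sqrt (2 * Real.pi * σ ^ 2) :=
    Real.sqrt_pos.mpr (by positivity)
  positivity

lemma mixPdf_pos {σ : ℝ} (hσ : 0 < σ) (a x : ℝ) : 0 < mixPdf σ a x := by
  unfold mixPdf
  have h1 := gaussPdf_pos hσ a x
  have h2 := gaussPdf_pos hσ (-a) x
  linarith

lemma continuous_gaussPdf (σ a : ℝ) : Continuous (gaussPdf σ a) := by
  unfold gaussPdf; fun_prop

lemma continuous_mixPdf (σ a : ℝ) : Continuous (mixPdf σ a) := by
  unfold mixPdf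
  exact (continuous_const.mul (continuous_gaussPdf σ a)).add
    (continuous_const.mul (continuous_gaussPdf σ (-a)))

lemma mixPdf_eq {σ : ℝ} (hσ : 0 < σ) (a x : ℝ) :
    mixPdf σ a x = gaussPdf σ 0 x *
      (Real.exp (-a^2 / (2*σ^2)) * Real.cosh (a*x/σ^2)) := by
  have hs : (σ:ℝ)^2 ≠ 0 := by positivity
  unfold mixPdf gaussPdf
  rw [Real.cosh_eq]
  rw [show (Real.sqrt (2 * Real.pi * σ ^ 2))⁻¹ * Real.exp (-(x - 0) ^ 2 / (2 * σ ^ 2)) *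
      (Real.exp (-a ^ 2 / (2 * σ ^ 2)) * ((Real.exp (a * x / σ ^ 2) +
        Real.exp (-(a * x / σ ^ 2))) / 2))
    = 1/2 * ((Real.sqrt (2 * Real.pi * σ ^ 2))⁻¹ *
        (Real.exp (-(x - 0) ^ 2 / (2 * σ ^ 2)) * Real.exp (-a ^ 2 / (2 * σ ^ 2)) *
          Real.exp (a * x / σ ^ 2)))
      + 1/2 * ((Real.sqrt (2 * Real.pi * σ ^ 2))⁻¹ *
        (Real.exp (-(x - 0) ^ 2 / (2 * σ ^ 2)) * Real.exp (-a ^ 2 / (2 * σ ^ 2)) *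
          Real.exp (-(a * x / σ ^ 2)))) from by ring]
  simp only [← Real.exp_add]
  have e1 : -(x - a) ^ 2 / (2 * σ ^ 2)
      = -(x - 0) ^ 2 / (2 * σ ^ 2) + -a ^ 2 / (2 * σ ^ 2) + a * x / σ ^ 2 := by
    field_simp; ring
  have e2 : -(x - -a) ^ 2 / (2 * σ ^ 2)
      = -(x - 0) ^ 2 / (2 * σ ^ 2) + -a ^ 2 / (2 * σ ^ 2) + -(a * x / σ ^ 2) := by
    field_simp; ring
  rw [e1, e2]

lemma log_mix_ratio {σ : ℝ} (hσ : 0 < σ) (u v x : ℝ) :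
    Real.log (mixPdf σ u x / mixPdf σ v x)
      = (v^2 - u^2)/(2*σ^2)
        + (Real.log (Real.cosh (u*x/σ^2)) - Real.log (Real.cosh (v*x/σ^2))) := by
  have lm : ∀ a : ℝ, Real.log (mixPdf σ a x)
      = Real.log (gaussPdf σ 0 x) + (-a^2/(2*σ^2)) + Real.log (Real.cosh (a*x/σ^2)) := by
    intro a
    rw [mixPdf_eq hσ, Real.log_mul (gaussPdf_pos hσ 0 x).ne'
        (by positivity : Real.exp (-a^2/(2*σ^2)) * Real.cosh (a*x/σ^2) ≠ 0),
      Real.log_mul (Real.exp_pos _).ne' (Real.cosh_pos _).ne', Real.log_exp, add_assoc]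
  rw [Real.log_div (mixPdf_pos hσ u x).ne' (mixPdf_pos hσ v x).ne', lm u, lm v]
  ring

/-! ### Gaussian integrals -/

lemma intk {b : ℝ} (hb : 0 < b) (k : ℕ) :
    Integrable (fun x : ℝ => x ^ k * Real.exp (-b * x^2)) := by
  have h := integrable_rpow_mul_exp_neg_mul_sq hb (s := (k:ℝ))
    (by have : (0:ℝ) ≤ (k:ℝ) := Nat.cast_nonneg k; linarith)
  simpa [Real.rpow_natCast] using h

lemma Jodd {b : ℝ} (k : ℕ) (hk : Odd k) :
    ∫ x : ℝ, x ^ k * Real.exp (-b * x^2) = 0 := by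
  have h := integral_neg_eq_self (fun x : ℝ => x ^ k * Real.exp (-b * x^2)) volume
  simp only [hk.neg_pow, neg_sq, neg_mul, integral_neg] at h
  simp only [neg_mul]
  linarith

lemma J2g {b : ℝ} (hb : 0 < b) :
    ∫ x : ℝ, x^2 * Real.exp (-b * x^2) = Real.sqrt (Real.pi/b) / (2*b) := by
  have h := integral_comp_abs (f := fun x : ℝ => x^2 * Real.exp (-b * x^2))
  simp only [sq_abs] at h
  rw [h, show (fun x:ℝ => x^2 * Real.exp (-b * x^2))
      = fun x:ℝ => x^(((2:ℕ)):ℝ) * Real.exp (-b * x^(((2:ℕ)):ℝ)) from by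
    funext x; rw [Real.rpow_natCast]]
  rw [integral_rpow_mul_exp_neg_mul_rpow (by norm_num) (by norm_num) hb]
  norm_num
  rw [show -((3:ℝ)/2) = (-(1/2) + -1) by norm_num, Real.rpow_add hb,
    Real.rpow_neg_one, show ((3:ℝ))/2 = 1/2 + 1 by norm_num,
    Real.Gamma_add_one (by norm_num), Real.Gamma_one_half_eq,
    Real.rpow_neg hb.le, ← Real.sqrt_eq_rpow, Real.sqrt_div Real.pi_pos.le]
  have hsb : 0 < Real.sqrt b := Real.sqrt_pos.mpr hb
  field_simp

lemma J4g {b : ℝ} (hb : 0 < b) :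
    ∫ x : ℝ, x^4 * Real.exp (-b * x^2) = 3 * Real.sqrt (Real.pi/b) / (4*b^2) := by
  have h := integral_comp_abs (f := fun x : ℝ => x^4 * Real.exp (-b * x^2))
  have habs : ∀ x : ℝ, |x|^4 * Real.exp (-b * |x|^2) = x^4 * Real.exp (-b * x^2) := by
    intro x; rw [sq_abs, ← abs_pow, abs_of_nonneg (by positivity : (0:ℝ) ≤ x^4)]
  simp only [habs] at h
  rw [h, show (fun x:ℝ => x^4 * Real.exp (-b * x^2))
      = fun x:ℝ => x^(((4:ℕ)):ℝ) * Real.exp (-b * x^(((2:ℕ)):ℝ)) from by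
    funext x; rw [Real.rpow_natCast, Real.rpow_natCast]]
  rw [integral_rpow_mul_exp_neg_mul_rpow (by norm_num) (by norm_num) hb]
  norm_num
  rw [show -((5:ℝ)/2) = (-(1/2) + (-1 + -1)) by norm_num, Real.rpow_add hb,
    Real.rpow_add hb, Real.rpow_neg_one,
    show ((5:ℝ))/2 = (1/2 + 1) + 1 by norm_num,
    Real.Gamma_add_one (by norm_num), Real.Gamma_add_one (by norm_num),
    Real.Gamma_one_half_eq,
    Real.rpow_neg hb.le, ← Real.sqrt_eq_rpow, Real.sqrt_div Real.pi_pos.le]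
  have hsb : 0 < Real.sqrt b := Real.sqrt_pos.mpr hb
  field_simp
  ring

/-! ### Gaussian moments -/

lemma gaussPdf_eq (σ a x : ℝ) :
    gaussPdf σ a x
      = (Real.sqrt (2*Real.pi*σ^2))⁻¹ * Real.exp (-(2*σ^2)⁻¹ * (x-a)^2) := by
  unfold gaussPdf
  congr 1
  ring_nf

lemma N_pos {σ : ℝ} (hσ : 0 < σ) : 0 < Real.sqrt (2*Real.pi*σ^2) :=
  Real.sqrt_pos.mpr (by positivity)

lemma sqrt_pi_b {σ : ℝ} (hσ : 0 < σ) :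
    Real.sqrt (Real.pi / (2*σ^2)⁻¹) = Real.sqrt (2*Real.pi*σ^2) := by
  rw [div_inv_eq_mul]; congr 1; ring

lemma gauss_moment {σ : ℝ} (n : ℕ) (a : ℝ) :
    ∫ x : ℝ, x^n * gaussPdf σ a x
      = (Real.sqrt (2*Real.pi*σ^2))⁻¹
          * ∫ x : ℝ, (x+a)^n * Real.exp (-(2*σ^2)⁻¹ * x^2) := by
  have e : (fun x : ℝ => x^n * gaussPdf σ a x)
      = fun x => (Real.sqrt (2*Real.pi*σ^2))⁻¹
          * ((fun y : ℝ => (y+a)^n * Real.exp (-(2*σ^2)⁻¹ * y^2)) (x - a)) := by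
    funext x
    rw [gaussPdf_eq]
    simp only [sub_add_cancel]
    ring
  rw [e, integral_const_mul]
  congr 1
  exact integral_sub_right_eq_self (fun y : ℝ => (y + a)^n * Real.exp (-(2*σ^2)⁻¹ * y^2)) a

lemma gauss_m0 {σ : ℝ} (hσ : 0 < σ) (a : ℝ) : ∫ x : ℝ, gaussPdf σ a x = 1 := by
  have h := gauss_moment (σ := σ) 0 a
  simp only [pow_zero, one_mul] at h
  rw [h, integral_gaussian, sqrt_pi_b hσ, inv_mul_cancel₀ (N_pos hσ).ne']

lemma gauss_m2 {σ : ℝ} (hσ : 0 < σ) (a : ℝ) :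
    ∫ x : ℝ, x^2 * gaussPdf σ a x = a^2 + σ^2 := by
  have hb : (0:ℝ) < (2*σ^2)⁻¹ := by positivity
  have e : (fun x : ℝ => (x+a)^2 * Real.exp (-(2*σ^2)⁻¹*x^2))
      = fun x => x^2*Real.exp (-(2*σ^2)⁻¹*x^2)
          + (2*a*(x^1*Real.exp (-(2*σ^2)⁻¹*x^2)) + a^2*(x^0*Real.exp (-(2*σ^2)⁻¹*x^2))) := by
    funext x; ring
  have i1 : Integrable (fun x : ℝ => 2*a*(x^1*Real.exp (-(2*σ^2)⁻¹*x^2))) :=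
    (intk hb 1).const_mul (2*a)
  have i0 : Integrable (fun x : ℝ => a^2*(x^0*Real.exp (-(2*σ^2)⁻¹*x^2))) :=
    (intk hb 0).const_mul (a^2)
  have i10 : Integrable (fun x : ℝ => 2*a*(x^1*Real.exp (-(2*σ^2)⁻¹*x^2))
      + a^2*(x^0*Real.exp (-(2*σ^2)⁻¹*x^2))) := i1.add i0
  rw [gauss_moment 2 a, e,
    integral_add (intk hb 2) i10,
    integral_add i1 i0,
    integral_const_mul, integral_const_mul, J2g hb, Jodd 1 odd_one]
  have h0 : ∫ x : ℝ, x^0 * Real.exp (-(2*σ^2)⁻¹*x^2) = Real.sqrt (2*Real.pi*σ^2) := by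
    simp only [pow_zero, one_mul]
    rw [integral_gaussian, sqrt_pi_b hσ]
  rw [h0, sqrt_pi_b hσ]
  have hN := (N_pos hσ).ne'
  field_simp
  ring

lemma gauss_m4 {σ : ℝ} (hσ : 0 < σ) (a : ℝ) :
    ∫ x : ℝ, x^4 * gaussPdf σ a x = a^4 + 6*a^2*σ^2 + 3*σ^4 := by
  have hb : (0:ℝ) < (2*σ^2)⁻¹ := by positivity
  have e : (fun x : ℝ => (x+a)^4 * Real.exp (-(2*σ^2)⁻¹*x^2))
      = fun x => x^4*Real.exp (-(2*σ^2)⁻¹*x^2)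
          + (4*a*(x^3*Real.exp (-(2*σ^2)⁻¹*x^2))
          + (6*a^2*(x^2*Real.exp (-(2*σ^2)⁻¹*x^2))
          + (4*a^3*(x^1*Real.exp (-(2*σ^2)⁻¹*x^2))
          + a^4*(x^0*Real.exp (-(2*σ^2)⁻¹*x^2))))) := by
    funext x; ring
  have i3 : Integrable (fun x : ℝ => 4*a*(x^3*Real.exp (-(2*σ^2)⁻¹*x^2))) :=
    (intk hb 3).const_mul (4*a)
  have i2 : Integrable (fun x : ℝ => 6*a^2*(x^2*Real.exp (-(2*σ^2)⁻¹*x^2))) :=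
    (intk hb 2).const_mul (6*a^2)
  have i1 : Integrable (fun x : ℝ => 4*a^3*(x^1*Real.exp (-(2*σ^2)⁻¹*x^2))) :=
    (intk hb 1).const_mul (4*a^3)
  have i0 : Integrable (fun x : ℝ => a^4*(x^0*Real.exp (-(2*σ^2)⁻¹*x^2))) :=
    (intk hb 0).const_mul (a^4)
  have i10 : Integrable (fun x : ℝ => 4*a^3*(x^1*Real.exp (-(2*σ^2)⁻¹*x^2))
      + a^4*(x^0*Real.exp (-(2*σ^2)⁻¹*x^2))) := i1.add i0
  have i210 : Integrable (fun x : ℝ => 6*a^2*(x^2*Real.exp (-(2*σ^2)⁻¹*x^2))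
      + (4*a^3*(x^1*Real.exp (-(2*σ^2)⁻¹*x^2))
      + a^4*(x^0*Real.exp (-(2*σ^2)⁻¹*x^2)))) := i2.add i10
  have i3210 : Integrable (fun x : ℝ => 4*a*(x^3*Real.exp (-(2*σ^2)⁻¹*x^2))
      + (6*a^2*(x^2*Real.exp (-(2*σ^2)⁻¹*x^2))
      + (4*a^3*(x^1*Real.exp (-(2*σ^2)⁻¹*x^2))
      + a^4*(x^0*Real.exp (-(2*σ^2)⁻¹*x^2))))) := i3.add i210
  rw [gauss_moment 4 a, e,
    integral_add (intk hb 4) i3210,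
    integral_add i3 i210,
    integral_add i2 i10,
    integral_add i1 i0,
    integral_const_mul, integral_const_mul, integral_const_mul, integral_const_mul,
    J4g hb, J2g hb, Jodd 1 odd_one, Jodd 3 (by decide)]
  have h0 : ∫ x : ℝ, x^0 * Real.exp (-(2*σ^2)⁻¹*x^2) = Real.sqrt (2*Real.pi*σ^2) := by
    simp only [pow_zero, one_mul]
    rw [integral_gaussian, sqrt_pi_b hσ]
  rw [h0, sqrt_pi_b hσ]
  have hN := (N_pos hσ).ne'
  field_simp
  ring

/-! ### Mixture integrability and moments -/

lemma integrable_pow_gauss {σ : ℝ} (hσ : 0 < σ) (n : ℕ) (a : ℝ) :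
    Integrable (fun x : ℝ => x^n * gaussPdf σ a x) := by
  have hb : (0:ℝ) < (2*σ^2)⁻¹ := by positivity
  have houter : Integrable (fun y : ℝ => (y+a)^n * Real.exp (-(2*σ^2)⁻¹ * y^2)) := by
    have e : (fun y : ℝ => (y+a)^n * Real.exp (-(2*σ^2)⁻¹ * y^2))
        = fun y => ∑ k ∈ Finset.range (n+1),
            (y^k * Real.exp (-(2*σ^2)⁻¹ * y^2)) * (a^(n-k) * (n.choose k)) := by
      funext y
      rw [add_pow, Finset.sum_mul]
      exact Finset.sum_congr rfl fun k _ => by ring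
    rw [e]
    exact integrable_finset_sum _ fun k _ => (intk hb k).mul_const _
  have e2 : (fun x : ℝ => x^n * gaussPdf σ a x)
      = fun x => (Real.sqrt (2*Real.pi*σ^2))⁻¹
          * ((fun y : ℝ => (y+a)^n * Real.exp (-(2*σ^2)⁻¹ * y^2)) (x - a)) := by
    funext x
    rw [gaussPdf_eq]
    simp only [sub_add_cancel]
    ring
  rw [e2]
  exact (houter.comp_sub_right a).const_mul _

lemma integrable_gauss {σ : ℝ} (hσ : 0 < σ) (a : ℝ) :
    Integrable (gaussPdf σ a) := by
  have := integrable_pow_gauss hσ 0 a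
  simpa using this

lemma integrable_pow_mix {σ : ℝ} (hσ : 0 < σ) (n : ℕ) (u : ℝ) :
    Integrable (fun x : ℝ => x^n * mixPdf σ u x) := by
  have e : (fun x : ℝ => x^n * mixPdf σ u x)
      = fun x => (1/2) * (x^n * gaussPdf σ u x) + (1/2) * (x^n * gaussPdf σ (-u) x) := by
    funext x; unfold mixPdf; ring
  rw [e]
  exact ((integrable_pow_gauss hσ n u).const_mul _).add
    ((integrable_pow_gauss hσ n (-u)).const_mul _)

lemma integrable_mix {σ : ℝ} (hσ : 0 < σ) (u : ℝ) : Integrable (mixPdf σ u) := by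
  have := integrable_pow_mix hσ 0 u
  simpa using this

lemma mix_m0 {σ : ℝ} (hσ : 0 < σ) (u : ℝ) : ∫ x : ℝ, mixPdf σ u x = 1 := by
  unfold mixPdf
  rw [integral_add ((integrable_gauss hσ u).const_mul _)
      ((integrable_gauss hσ (-u)).const_mul _),
    integral_const_mul, integral_const_mul, gauss_m0 hσ, gauss_m0 hσ]
  norm_num

lemma mix_m2 {σ : ℝ} (hσ : 0 < σ) (u : ℝ) :
    ∫ x : ℝ, x^2 * mixPdf σ u x = u^2 + σ^2 := by
  have e : (fun x : ℝ => x^2 * mixPdf σ u x)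
      = fun x => (1/2) * (x^2 * gaussPdf σ u x) + (1/2) * (x^2 * gaussPdf σ (-u) x) := by
    funext x; unfold mixPdf; ring
  rw [e, integral_add ((integrable_pow_gauss hσ 2 u).const_mul _)
      ((integrable_pow_gauss hσ 2 (-u)).const_mul _),
    integral_const_mul, integral_const_mul, gauss_m2 hσ, gauss_m2 hσ]
  ring

lemma mix_m4 {σ : ℝ} (hσ : 0 < σ) (u : ℝ) :
    ∫ x : ℝ, x^4 * mixPdf σ u x = u^4 + 6*u^2*σ^2 + 3*σ^4 := by
  have e : (fun x : ℝ => x^4 * mixPdf σ u x)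
      = fun x => (1/2) * (x^4 * gaussPdf σ u x) + (1/2) * (x^4 * gaussPdf σ (-u) x) := by
    funext x; unfold mixPdf; ring
  rw [e, integral_add ((integrable_pow_gauss hσ 4 u).const_mul _)
      ((integrable_pow_gauss hσ 4 (-u)).const_mul _),
    integral_const_mul, integral_const_mul, gauss_m4 hσ, gauss_m4 hσ]
  ring

/-! ### Main theorem -/

theorem kl_mixture_bound (σ u v : ℝ) (hσ : 0 < σ) (hu : 0 ≤ u) (hv : 0 ≤ v) :
    ∫ x : ℝ, mixPdf σ u x * Real.log (mixPdf σ u x / mixPdf σ v x)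
      ≤ ((u ^ 2 - v ^ 2) / (2 * σ ^ 4)) * u ^ 2
        + (v ^ 3 * max 0 (v - u) / (2 * σ ^ 8))
            * (u ^ 4 + 6 * u ^ 2 * σ ^ 2 + 3 * σ ^ 4) := by
  have hσ2 : (0:ℝ) < σ^2 := by positivity
  have hσ4 : (0:ℝ) < σ^4 := by positivity
  have hσ8 : (0:ℝ) < σ^8 := by positivity
  -- pointwise bound on the log-ratio
  have hlog : ∀ x : ℝ, Real.log (mixPdf σ u x / mixPdf σ v x)
      ≤ (v^2 - u^2)/(2*σ^2) + (u^2 - v^2)/(2*σ^4) * x^2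
        + max 0 (v^4 - u^4)/(12*σ^8) * x^4 := by
    intro x
    rw [log_mix_ratio hσ u v x]
    have h := logcosh_diff_le (u*x/σ^2) (v*x/σ^2)
    have e1 : ((u*x/σ^2)^2 - (v*x/σ^2)^2)/2 = (u^2 - v^2)/(2*σ^4) * x^2 := by
      field_simp
    have e2 : max 0 ((v*x/σ^2)^4 - (u*x/σ^2)^4)/12
        = max 0 (v^4 - u^4)/(12*σ^8) * x^4 := by
      have hc : (0:ℝ) ≤ x^4/σ^8 := by positivity
      have h1 : (v*x/σ^2)^4 - (u*x/σ^2)^4 = (v^4 - u^4) * (x^4/σ^8) := by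
        field_simp
      rw [h1, show (0:ℝ) = 0 * (x^4/σ^8) from (zero_mul _).symm,
        ← max_mul_of_nonneg _ _ hc]
      ring
    rw [e1, e2] at h
    linarith
  -- bound on the absolute value of the log-ratio
  have habs : ∀ x : ℝ, |Real.log (mixPdf σ u x / mixPdf σ v x)|
      ≤ |(v^2 - u^2)/(2*σ^2)| + (u^2 + v^2)/(2*σ^4) * x^2 := by
    intro x
    rw [log_mix_ratio hσ u v x]
    have h1 := logcosh_nonneg (u*x/σ^2)
    have h2 := logcosh_nonneg (v*x/σ^2)
    have l1 := logcosh_le_sq (u*x/σ^2)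
    have l2 := logcosh_le_sq (v*x/σ^2)
    have heq : (u*x/σ^2)^2/2 + (v*x/σ^2)^2/2 = (u^2 + v^2)/(2*σ^4) * x^2 := by
      field_simp
    have sq1 : (0:ℝ) ≤ (u*x/σ^2)^2 := sq_nonneg _
    have sq2 : (0:ℝ) ≤ (v*x/σ^2)^2 := sq_nonneg _
    have hd : |Real.log (Real.cosh (u*x/σ^2)) - Real.log (Real.cosh (v*x/σ^2))|
        ≤ (u^2 + v^2)/(2*σ^4) * x^2 := by
      rw [abs_le]
      constructor
      · linarith
      · linarith
    calc |(v^2 - u^2)/(2*σ^2)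
          + (Real.log (Real.cosh (u*x/σ^2)) - Real.log (Real.cosh (v*x/σ^2)))|
        ≤ |(v^2 - u^2)/(2*σ^2)|
          + |Real.log (Real.cosh (u*x/σ^2)) - Real.log (Real.cosh (v*x/σ^2))| :=
          abs_add_le _ _
      _ ≤ |(v^2 - u^2)/(2*σ^2)| + (u^2 + v^2)/(2*σ^4) * x^2 := by linarith
  have hmixpos := fun x => mixPdf_pos hσ u x
  -- integrability of the integrand
  have hintf : Integrable
      (fun x : ℝ => mixPdf σ u x * Real.log (mixPdf σ u x / mixPdf σ v x)) := by
    apply Integrable.mono'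
      (g := fun x : ℝ => mixPdf σ u x * (|(v^2 - u^2)/(2*σ^2)| + (u^2 + v^2)/(2*σ^4) * x^2))
    · have e : (fun x : ℝ =>
            mixPdf σ u x * (|(v^2 - u^2)/(2*σ^2)| + (u^2 + v^2)/(2*σ^4) * x^2))
          = fun x => |(v^2 - u^2)/(2*σ^2)| * mixPdf σ u x
              + ((u^2 + v^2)/(2*σ^4)) * (x^2 * mixPdf σ u x) := by
        funext x; ring
      rw [e]
      exact ((integrable_mix hσ u).const_mul _).add
        ((integrable_pow_mix hσ 2 u).const_mul _)
    · refine Continuous.aestronglyMeasurable ?_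
      refine (continuous_mixPdf σ u).mul (Continuous.log ?_ ?_)
      · exact (continuous_mixPdf σ u).div (continuous_mixPdf σ v)
          fun x => (mixPdf_pos hσ v x).ne'
      · exact fun x => (div_pos (mixPdf_pos hσ u x) (mixPdf_pos hσ v x)).ne'
    · filter_upwards with x
      rw [Real.norm_eq_abs, abs_mul, abs_of_nonneg (hmixpos x).le]
      exact mul_le_mul_of_nonneg_left (habs x) (hmixpos x).le
  -- the dominating function and its integral
  have e : (fun x : ℝ => mixPdf σ u x * ((v^2 - u^2)/(2*σ^2) + (u^2 - v^2)/(2*σ^4) * x^2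
        + max 0 (v^4 - u^4)/(12*σ^8) * x^4))
      = fun x => (v^2 - u^2)/(2*σ^2) * mixPdf σ u x
          + ((u^2 - v^2)/(2*σ^4) * (x^2 * mixPdf σ u x)
          + max 0 (v^4 - u^4)/(12*σ^8) * (x^4 * mixPdf σ u x)) := by
    funext x; ring
  have ia : Integrable (fun x : ℝ => (v^2 - u^2)/(2*σ^2) * mixPdf σ u x) :=
    (integrable_mix hσ u).const_mul _
  have ib : Integrable (fun x : ℝ => (u^2 - v^2)/(2*σ^4) * (x^2 * mixPdf σ u x)) :=
    (integrable_pow_mix hσ 2 u).const_mul _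
  have ic : Integrable
      (fun x : ℝ => max 0 (v^4 - u^4)/(12*σ^8) * (x^4 * mixPdf σ u x)) :=
    (integrable_pow_mix hσ 4 u).const_mul _
  have ibc : Integrable (fun x : ℝ => (u^2 - v^2)/(2*σ^4) * (x^2 * mixPdf σ u x)
      + max 0 (v^4 - u^4)/(12*σ^8) * (x^4 * mixPdf σ u x)) := ib.add ic
  have hintg : Integrable (fun x : ℝ => mixPdf σ u x
      * ((v^2 - u^2)/(2*σ^2) + (u^2 - v^2)/(2*σ^4) * x^2
        + max 0 (v^4 - u^4)/(12*σ^8) * x^4)) := by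
    rw [e]; exact ia.add ibc
  have hmono := integral_mono hintf hintg
    (fun x => mul_le_mul_of_nonneg_left (hlog x) (hmixpos x).le)
  have hg : ∫ x : ℝ, mixPdf σ u x * ((v^2 - u^2)/(2*σ^2) + (u^2 - v^2)/(2*σ^4) * x^2
        + max 0 (v^4 - u^4)/(12*σ^8) * x^4)
      = (v^2 - u^2)/(2*σ^2) + ((u^2 - v^2)/(2*σ^4) * (u^2 + σ^2)
        + max 0 (v^4 - u^4)/(12*σ^8) * (u^4 + 6*u^2*σ^2 + 3*σ^4)) := by
    rw [e, integral_add ia ibc, integral_add ib ic, integral_const_mul, integral_const_mul,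
      integral_const_mul, mix_m0 hσ, mix_m2 hσ, mix_m4 hσ]
    ring
  rw [hg] at hmono
  refine hmono.trans ?_
  -- final algebra
  have key : max 0 (v^4 - u^4) ≤ 6 * (v^3 * max 0 (v - u)) := by
    rcases le_total v u with h | h
    · have h4 : v^4 ≤ u^4 := pow_le_pow_left₀ hv h 4
      rw [max_eq_left (by linarith), max_eq_left (by linarith)]
      simp
    · have h4 : u^4 ≤ v^4 := pow_le_pow_left₀ hu h 4
      rw [max_eq_right (by linarith), max_eq_right (by linarith)]
      nlinarith [mul_nonneg (mul_nonneg hu hu) hu, mul_nonneg hu hv,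
        mul_nonneg (mul_nonneg hv hv) hv, mul_nonneg (mul_nonneg hu hu) hv,
        mul_nonneg (mul_nonneg hv hv) hu, sq_nonneg (u - v), sq_nonneg (u + v)]
  have e1 : (v^2 - u^2)/(2*σ^2) + (u^2 - v^2)/(2*σ^4) * (u^2 + σ^2)
      = (u^2 - v^2)/(2*σ^4) * u^2 := by
    field_simp
    ring
  have hm4 : (0:ℝ) ≤ u^4 + 6*u^2*σ^2 + 3*σ^4 := by positivity
  have e2 : max 0 (v^4 - u^4)/(12*σ^8) * (u^4 + 6*u^2*σ^2 + 3*σ^4)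
      ≤ v^3 * max 0 (v - u)/(2*σ^8) * (u^4 + 6*u^2*σ^2 + 3*σ^4) := by
    apply mul_le_mul_of_nonneg_right _ hm4
    rw [div_le_div_iff₀ (by positivity) (by positivity)]
    nlinarith [key, hσ8]
  linarith
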